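/- Let X be a set and C : Set X → X → Prop a relation satisfying: (R) C {x} x for all x; (T) for every index type I, all families A : I → Set X, y : I → X and every z ∈ X, if C (A i) (y i) for all i and C (Set.range y) z, then C (⋃ i, A i) z; and (Clo) if C A y and A ⊆ B then C B y. Define c : Set X → Set X by c A = {y | C A y}. Then A ⊆ c A for all A, and for all A, B: B ⊆ c A implies c B ⊆ c A (so c is a closure operator: extensive, monotone, idempotent). Conversely, if c : Set X → Set X is extensive (A ⊆ c A), monotone (A ⊆ B → c A ⊆ c B) and idempotent (c (c A) = c A), then the relation C A y := y ∈ c A satisfies (R), (T) and (Clo). -/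
import Mathlib

universe u

theorem stmt11 {X : Type u} :
    (∀ C : Set X → X → Prop,
      (∀ x : X, C {x} x) →
      (∀ (I : Type u) (A : I → Set X) (y : I → X) (z : X),
        (∀ i, C (A i) (y i)) → C (Set.range y) z → C (⋃ i, A i) z) →
      (∀ (A B : Set X) (y : X), C A y → A ⊆ B → C B y) →
      ((∀ A : Set X, A ⊆ {y | C A y}) ∧
        ∀ A B : Set X, B ⊆ {y | C A y} → {y | C B y} ⊆ {y | C A y})) ∧
    (∀ c : Set X → Set X,
      (∀ A : Set X, A ⊆ c A) →
      (∀ A B : Set X, A ⊆ B → c A ⊆ c B) →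
      (∀ A : Set X, c (c A) = c A) →
      ((∀ x : X, x ∈ c {x}) ∧
        (∀ (I : Type u) (A : I → Set X) (y : I → X) (z : X),
          (∀ i, y i ∈ c (A i)) → z ∈ c (Set.range y) → z ∈ c (⋃ i, A i)) ∧
        (∀ (A B : Set X) (y : X), y ∈ c A → A ⊆ B → y ∈ c B))) := by
  constructor
  · intro C hR hT hClo
    constructor
    · intro A x hx
      exact hClo {x} A x (hR x) (Set.singleton_subset_iff.mpr hx)
    · intro A B hBA y hy
      have h := hT (↥B) (fun _ => A) (fun i => (i : X)) y
        (fun i => hBA i.2) (by rwa [Subtype.range_coe])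
      exact hClo _ A y h (Set.iUnion_subset fun _ => subset_rfl)
  · intro c hext hmono hidem
    refine ⟨fun x => hext {x} rfl, ?_, fun A B y hy hAB => hmono A B hAB hy⟩
    intro I A y z hy hz
    have h1 : Set.range y ⊆ c (⋃ i, A i) := by
      rintro _ ⟨i, rfl⟩
      exact hmono (A i) (⋃ i, A i) (Set.subset_iUnion A i) (hy i)
    have := hmono _ _ h1 hz
    rwa [hidem] at this
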